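/- Let γ > 1 and let w̄, û ∈ ℝ⁴ be states whose first components (densities) are positive. Suppose p(w̄) > 0 and p(û) < 0, and set t = p(w̄)/(p(w̄) − p(û)). Then t ∈ (0,1), and for every s ∈ [0, t] the state s·û + (1−s)·w̄ satisfies p(s·û + (1−s)·w̄) ≥ 0. -/

import Mathlib

/-- Pressure of a 2D Euler state `w = (ρ, m, n, E)`. -/
noncomputable def eulerPressure (γ : ℝ) (w : Fin 4 → ℝ) : ℝ :=
  (γ - 1) * (w 3 - ((w 1) ^ 2 + (w 2) ^ 2) / (2 * w 0))

lemma cauchy_frac (a b x y : ℝ) (ha : 0 < a) (hb : 0 < b) :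
    (x + y) ^ 2 / (a + b) ≤ x ^ 2 / a + y ^ 2 / b := by
  rw [div_add_div _ _ (ne_of_gt ha) (ne_of_gt hb), div_le_div_iff₀ (by linarith) (by positivity)]
  nlinarith [sq_nonneg (x * b - y * a), mul_pos ha hb]

/-- The scaling value of the second step of the Zhang–Shu limiter: if `p(w̄) > 0`
and `p(û) < 0` then `t = p(w̄)/(p(w̄) − p(û)) ∈ (0,1)` and the pressure of the
convex combination `s·û + (1−s)·w̄` is nonnegative for every `s ∈ [0, t]`. -/
theorem zhangShu_pressure_scaling (γ : ℝ) (hγ : 1 < γ)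
    (wbar uhat : Fin 4 → ℝ) (hwbar : 0 < wbar 0) (huhat : 0 < uhat 0)
    (hpbar : 0 < eulerPressure γ wbar) (hphat : eulerPressure γ uhat < 0)
    (t : ℝ) (ht : t = eulerPressure γ wbar / (eulerPressure γ wbar - eulerPressure γ uhat)) :
    (0 < t ∧ t < 1) ∧
      ∀ s, 0 ≤ s → s ≤ t → 0 ≤ eulerPressure γ (s • uhat + (1 - s) • wbar) := by
  have hden : 0 < eulerPressure γ wbar - eulerPressure γ uhat := by linarith
  have ht01 : 0 < t ∧ t < 1 := by
    constructor
    · rw [ht]; positivity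
    · rw [ht, div_lt_one hden]; linarith
  refine ⟨ht01, fun s hs0 hst => ?_⟩
  have hs1 : s < 1 := lt_of_le_of_lt hst ht01.2
  -- linear lower bound value
  have hlin : 0 ≤ s * eulerPressure γ uhat + (1 - s) * eulerPressure γ wbar := by
    have : s * (eulerPressure γ wbar - eulerPressure γ uhat) ≤ eulerPressure γ wbar := by
      rw [ht, le_div_iff₀ hden] at hst
      linarith [hst]
    nlinarith
  -- concavity: p at the combination dominates the linear combination
  have hconc : s * eulerPressure γ uhat + (1 - s) * eulerPressure γ wbar ≤
      eulerPressure γ (s • uhat + (1 - s) • wbar) := by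
    simp only [eulerPressure, Pi.add_apply, Pi.smul_apply, smul_eq_mul]
    have hγ1 : 0 < γ - 1 := by linarith
    rw [← sub_nonneg]
    have key : ((s * uhat 1 + (1 - s) * wbar 1) ^ 2 + (s * uhat 2 + (1 - s) * wbar 2) ^ 2) /
          (2 * (s * uhat 0 + (1 - s) * wbar 0)) ≤
        s * ((uhat 1 ^ 2 + uhat 2 ^ 2) / (2 * uhat 0)) +
          (1 - s) * ((wbar 1 ^ 2 + wbar 2 ^ 2) / (2 * wbar 0)) := by
      rcases eq_or_lt_of_le hs0 with h0 | hs0'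
      · rw [← h0]; ring_nf; exact le_refl _
      · have h1s : 0 < 1 - s := by linarith
        have ha : 0 < 2 * (s * uhat 0) := by positivity
        have hb : 0 < 2 * ((1 - s) * wbar 0) := by positivity
        have h1 := cauchy_frac (2 * (s * uhat 0)) (2 * ((1 - s) * wbar 0))
          (s * uhat 1) ((1 - s) * wbar 1) ha hb
        have h2 := cauchy_frac (2 * (s * uhat 0)) (2 * ((1 - s) * wbar 0))
          (s * uhat 2) ((1 - s) * wbar 2) ha hb
        have e1 : (s * uhat 1) ^ 2 / (2 * (s * uhat 0)) = s * (uhat 1 ^ 2 / (2 * uhat 0)) := by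
          field_simp
        have e2 : (s * uhat 2) ^ 2 / (2 * (s * uhat 0)) = s * (uhat 2 ^ 2 / (2 * uhat 0)) := by
          field_simp
        have e3 : ((1 - s) * wbar 1) ^ 2 / (2 * ((1 - s) * wbar 0)) =
            (1 - s) * (wbar 1 ^ 2 / (2 * wbar 0)) := by
          field_simp
        have e4 : ((1 - s) * wbar 2) ^ 2 / (2 * ((1 - s) * wbar 0)) =
            (1 - s) * (wbar 2 ^ 2 / (2 * wbar 0)) := by
          field_simp
        have hsum : 2 * (s * uhat 0) + 2 * ((1 - s) * wbar 0) =
            2 * (s * uhat 0 + (1 - s) * wbar 0) := by ring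
        rw [hsum] at h1 h2
        calc ((s * uhat 1 + (1 - s) * wbar 1) ^ 2 + (s * uhat 2 + (1 - s) * wbar 2) ^ 2) /
              (2 * (s * uhat 0 + (1 - s) * wbar 0))
            = (s * uhat 1 + (1 - s) * wbar 1) ^ 2 / (2 * (s * uhat 0 + (1 - s) * wbar 0)) +
              (s * uhat 2 + (1 - s) * wbar 2) ^ 2 / (2 * (s * uhat 0 + (1 - s) * wbar 0)) := by
              rw [add_div]
          _ ≤ (s * uhat 1) ^ 2 / (2 * (s * uhat 0)) + ((1 - s) * wbar 1) ^ 2 / (2 * ((1 - s) * wbar 0)) +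
              ((s * uhat 2) ^ 2 / (2 * (s * uhat 0)) + ((1 - s) * wbar 2) ^ 2 / (2 * ((1 - s) * wbar 0))) := by
              exact add_le_add h1 h2
          _ = s * ((uhat 1 ^ 2 + uhat 2 ^ 2) / (2 * uhat 0)) +
              (1 - s) * ((wbar 1 ^ 2 + wbar 2 ^ 2) / (2 * wbar 0)) := by
              rw [e1, e2, e3, e4]; ring
    nlinarith [mul_le_mul_of_nonneg_left key (le_of_lt hγ1)]
  linarith
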